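/- Let H be a 3-uniform hypergraph whose hyperedges are colored with t colors. Suppose there exist m distinct vertices v₁,…,v_m and a color c such that for every pair i < j, at least 3 hyperedges of color c contain both vᵢ and v_j. Then H contains a monochromatic complete Berge hypergraph K_m^{(3)} in color c: there exist pairwise distinct hyperedges h_{ij} (1 ≤ i < j ≤ m), all of color c, with {vᵢ, v_j} ⊆ h_{ij}. -/

import Mathlib

/-- If every pair among m fixed vertices lies in at least 3 hyperedges of
color k, then there is a monochromatic complete Berge hypergraph of order m
in color k on those vertices. -/
theorem stmt7 {N t m : ℕ} (H : Finset (Finset (Fin N)))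
    (hu : ∀ s ∈ H, s.card = 3) (c : Finset (Fin N) → Fin t) (k : Fin t)
    (v : Fin m → Fin N) (hv : Function.Injective v)
    (hdeg : ∀ i j : Fin m, i < j →
      3 ≤ (H.filter (fun s => c s = k ∧ v i ∈ s ∧ v j ∈ s)).card) :
    ∃ h : Fin m → Fin m → Finset (Fin N),
      (∀ i j : Fin m, i < j →
        h i j ∈ H ∧ c (h i j) = k ∧ v i ∈ h i j ∧ v j ∈ h i j) ∧
      (∀ i j i' j' : Fin m, i < j → i' < j' → h i j = h i' j' →
        i = i' ∧ j = j') := by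
  classical
  let P := {p : Fin m × Fin m // p.1 < p.2}
  let T : P → Finset (Finset (Fin N)) := fun p =>
    H.filter (fun s => c s = k ∧ v p.1.1 ∈ s ∧ v p.1.2 ∈ s)
  have hall : ∀ s : Finset P, s.card ≤ (s.biUnion T).card := by
    intro s
    set U := s.biUnion T with hU
    have key : ∀ e ∈ U, (s.filter (fun p => e ∈ T p)).card ≤ 3 := by
      intro e he
      obtain ⟨p0, hp0, hp0e⟩ := Finset.mem_biUnion.mp he
      have heH : e ∈ H := (Finset.mem_filter.mp hp0e).1
      have hcard := hu e heH
      have hle : (s.filter (fun p => e ∈ T p)).card ≤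
          (Finset.powersetCard 2 e).card := by
        apply Finset.card_le_card_of_injOn (fun p => {v p.1.1, v p.1.2})
        · intro p hp
          simp only [Finset.mem_coe, Finset.mem_filter, T] at hp
          obtain ⟨-, -, -, h1, h2⟩ := hp
          rw [Finset.mem_coe, Finset.mem_powersetCard]
          refine ⟨?_, ?_⟩
          · intro x hx
            simp only [Finset.mem_insert, Finset.mem_singleton] at hx
            rcases hx with rfl | rfl
            · exact h1
            · exact h2
          · rw [Finset.card_insert_of_notMem, Finset.card_singleton]
            simp only [Finset.mem_singleton]
            exact fun hh => absurd (hv hh) (ne_of_lt p.2)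
        · intro p hp q hq hpq0
          have hpq : ({v p.1.1, v p.1.2} : Finset (Fin N)) = {v q.1.1, v q.1.2} := hpq0
          have hpa : v p.1.1 ∈ ({v q.1.1, v q.1.2} : Finset (Fin N)) := by
            rw [← hpq]; simp
          have hpb : v p.1.2 ∈ ({v q.1.1, v q.1.2} : Finset (Fin N)) := by
            rw [← hpq]; simp
          simp only [Finset.mem_insert, Finset.mem_singleton] at hpa hpb
          have hpa' := hpa.imp (fun h => hv h) (fun h => hv h)
          have hpb' := hpb.imp (fun h => hv h) (fun h => hv h)
          have hp2 := p.2
          have hq2 := q.2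
          rcases hpa' with h1 | h1 <;> rcases hpb' with h2 | h2
          · exact absurd (h1 ▸ h2 ▸ hp2) (lt_irrefl _)
          · exact Subtype.ext (Prod.ext h1 h2)
          · exact absurd (hp2.trans (h2 ▸ hq2)) (by rw [h1]; exact lt_irrefl _)
          · exact absurd (h1 ▸ h2 ▸ hp2) (lt_irrefl _)
      rw [Finset.card_powersetCard, hcard] at hle
      simpa using hle
    have h1 : 3 * s.card ≤ ∑ p ∈ s, (T p).card := by
      rw [mul_comm, ← Finset.sum_const_nat (m := 3) (fun _ _ => rfl)]
      · exact Finset.sum_le_sum (fun p hp => hdeg p.1.1 p.1.2 p.2)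
    have h2 : ∑ p ∈ s, (T p).card = ∑ e ∈ U, (s.filter (fun p => e ∈ T p)).card := by
      have : ∀ p ∈ s, (T p).card = (U.filter (fun e => e ∈ T p)).card := by
        intro p hp
        congr 1
        ext e
        simp only [Finset.mem_filter, hU, Finset.mem_biUnion]
        exact ⟨fun h => ⟨⟨p, hp, h⟩, h⟩, fun h => h.2⟩
      rw [Finset.sum_congr rfl this]
      simp only [Finset.card_filter]
      rw [Finset.sum_comm]
    have h3 : ∑ e ∈ U, (s.filter (fun p => e ∈ T p)).card ≤ 3 * U.card := by
      rw [mul_comm]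
      calc ∑ e ∈ U, (s.filter (fun p => e ∈ T p)).card ≤ ∑ e ∈ U, 3 :=
            Finset.sum_le_sum key
        _ = U.card * 3 := by rw [Finset.sum_const, smul_eq_mul]
    have := (h1.trans (h2 ▸ h3))
    omega
  obtain ⟨f, hfinj, hf⟩ :=
    (Finset.all_card_le_biUnion_card_iff_exists_injective T).mp hall
  refine ⟨fun i j => if hij : i < j then f ⟨(i, j), hij⟩ else ∅, ?_, ?_⟩
  · intro i j hij
    have := hf ⟨(i, j), hij⟩
    simp only [T, Finset.mem_filter] at this
    simp only [dif_pos hij]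
    exact ⟨this.1, this.2.1, this.2.2.1, this.2.2.2⟩
  · intro i j i' j' hij hij' heq
    simp only [dif_pos hij, dif_pos hij'] at heq
    have := hfinj heq
    have h' : ((i, j) : Fin m × Fin m) = (i', j') := congrArg Subtype.val this
    exact ⟨congrArg Prod.fst h', congrArg Prod.snd h'⟩
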